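/- The denoising score matching identity: for each t, E_{x_t}‖∇ log p_t(x_t) − s(x_t)‖² = E_{x_0} E_{x_t|x_0}‖∇ log p_t(x_t | x_0) − s(x_t)‖² + C, where C does not depend on s. In particular, the two objectives have the same minimizers over s. -/

import Mathlib

set_option linter.unusedSectionVars false
set_option maxHeartbeats 1000000


open MeasureTheory
open scoped InnerProductSpace ENNReal

/-- The marginal density `p_t(x_t) = ∫ p_t(x_t ∣ x_0) p_0(x_0) dx_0`, where `pc x0 x =
p_t(x ∣ x0)` is the conditional density and `p0` the initial density. -/
noncomputable def margDens {d : ℕ} (p0 : EuclideanSpace ℝ (Fin d) → ℝ)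
    (pc : EuclideanSpace ℝ (Fin d) → EuclideanSpace ℝ (Fin d) → ℝ) :
    EuclideanSpace ℝ (Fin d) → ℝ :=
  fun x => ∫ x0, p0 x0 * pc x0 x

/-- The joint law of `(x_0, x_t)`, with density `p_0(x_0) p_t(x_t ∣ x_0)`. -/
noncomputable def jointLaw {d : ℕ} (p0 : EuclideanSpace ℝ (Fin d) → ℝ)
    (pc : EuclideanSpace ℝ (Fin d) → EuclideanSpace ℝ (Fin d) → ℝ) :
    Measure (EuclideanSpace ℝ (Fin d) × EuclideanSpace ℝ (Fin d)) :=
  (volume.prod volume).withDensity fun z => ENNReal.ofReal (p0 z.1 * pc z.1 z.2)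

section Aux

variable {F : Type*} [NormedAddCommGroup F] [InnerProductSpace ℝ F] [CompleteSpace F]

lemma inner_gradient_eq (f : F → ℝ) (x v : F) :
    ⟪gradient f x, v⟫_ℝ = fderiv ℝ f x v :=
  InnerProductSpace.toDual_symm_apply

lemma gradient_log_eq {f : F → ℝ} {x : F} (hf : DifferentiableAt ℝ f x) (hx : f x ≠ 0) :
    gradient (fun y => Real.log (f y)) x = (f x)⁻¹ • gradient f x := by
  have h1 : HasFDerivAt f (fderiv ℝ f x) x := hf.hasFDerivAt
  have h2 : HasFDerivAt (fun y => Real.log (f y)) ((f x)⁻¹ • fderiv ℝ f x) x := h1.log hx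
  rw [gradient, h2.fderiv, LinearIsometryEquiv.map_smul, gradient]

lemma continuous_gradient {f : F → ℝ} (hf : ContDiff ℝ (⊤ : ℕ∞) f) :
    Continuous (gradient f) := by
  have : Continuous (fderiv ℝ f) := hf.continuous_fderiv (by simp)
  exact (LinearIsometryEquiv.continuous _).comp this

omit [CompleteSpace F] in
lemma hasFDerivAt_partial {f : F × F → ℝ} (hf : ContDiff ℝ (⊤ : ℕ∞) f) (z : F × F) :
    HasFDerivAt (fun y => f (z.1, y))
      ((fderiv ℝ f z).comp (ContinuousLinearMap.inr ℝ F F)) z.2 := by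
  have h1 : HasFDerivAt f (fderiv ℝ f z) z :=
    (hf.differentiable (by simp) z).hasFDerivAt
  have h2 : HasFDerivAt (fun y : F => (z.1, y)) (ContinuousLinearMap.inr ℝ F F) z.2 :=
    hasFDerivAt_prodMk_right z.1 z.2
  exact h1.comp z.2 h2

lemma gradient_partial_eq {f : F × F → ℝ} (hf : ContDiff ℝ (⊤ : ℕ∞) f) (z : F × F) :
    gradient (fun y => f (z.1, y)) z.2 =
      (InnerProductSpace.toDual ℝ F).symm
        ((fderiv ℝ f z).comp (ContinuousLinearMap.inr ℝ F F)) := by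
  rw [gradient, (hasFDerivAt_partial hf z).fderiv]

lemma continuous_gradient_partial {f : F × F → ℝ} (hf : ContDiff ℝ (⊤ : ℕ∞) f) :
    Continuous (fun z : F × F => gradient (fun y => f (z.1, y)) z.2) := by
  have h1 : Continuous (fderiv ℝ f) := hf.continuous_fderiv (by simp)
  have h2 : Continuous (fun z : F × F =>
      (fderiv ℝ f z).comp (ContinuousLinearMap.inr ℝ F F)) :=
    h1.clm_comp continuous_const
  have h3 := (LinearIsometryEquiv.continuous
    (InnerProductSpace.toDual ℝ F).symm).comp h2
  refine h3.congr fun z => ?_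
  rw [gradient_partial_eq hf z]
  rfl

lemma MeasureTheory.MemLp.integrable_inner'' {α : Type*} {mα : MeasurableSpace α} {μ : Measure α}
    {f g : α → F} (hf : MemLp f 2 μ) (hg : MemLp g 2 μ) :
    Integrable (fun x => ⟪f x, g x⟫_ℝ) μ := by
  have := MeasureTheory.L2.integrable_inner (𝕜 := ℝ) (hf.toLp f) (hg.toLp g)
  refine this.congr ?_
  filter_upwards [hf.coeFn_toLp, hg.coeFn_toLp] with x h1 h2
  rw [h1, h2]

end Aux

section Main

variable {d : ℕ} {p0 : EuclideanSpace ℝ (Fin d) → ℝ}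
  {pc : EuclideanSpace ℝ (Fin d) → EuclideanSpace ℝ (Fin d) → ℝ}

local notation "E" => EuclideanSpace ℝ (Fin d)

-- integral over jointLaw as a weighted integral over the product of Lebesgue measures
lemma jointLaw_integral_eq {X : Type*} [NormedAddCommGroup X] [NormedSpace ℝ X]
    (hq : Continuous fun z : E × E => p0 z.1 * pc z.1 z.2)
    (hq0 : ∀ z : E × E, 0 ≤ p0 z.1 * pc z.1 z.2) (f : E × E → X) :
    ∫ z, f z ∂(jointLaw p0 pc)
      = ∫ z, (p0 z.1 * pc z.1 z.2) • f z ∂(volume.prod volume) := by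
  have hmeas : Measurable fun z : E × E => (p0 z.1 * pc z.1 z.2).toNNReal :=
    hq.measurable.real_toNNReal
  have : jointLaw p0 pc
      = (volume.prod volume).withDensity
          fun z => ((p0 z.1 * pc z.1 z.2).toNNReal : ℝ≥0∞) := rfl
  rw [this, integral_withDensity_eq_integral_smul hmeas]
  refine integral_congr_ae (Filter.Eventually.of_forall fun z => ?_)
  simp [NNReal.smul_def, Real.coe_toNNReal _ (hq0 z)]

lemma jointLaw_integrable_iff {X : Type*} [NormedAddCommGroup X] [NormedSpace ℝ X]
    (hq : Continuous fun z : E × E => p0 z.1 * pc z.1 z.2)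
    (hq0 : ∀ z : E × E, 0 ≤ p0 z.1 * pc z.1 z.2) (f : E × E → X) :
    Integrable f (jointLaw p0 pc)
      ↔ Integrable (fun z => (p0 z.1 * pc z.1 z.2) • f z) (volume.prod volume) := by
  have hmeas : Measurable fun z : E × E => (p0 z.1 * pc z.1 z.2).toNNReal :=
    hq.measurable.real_toNNReal
  have h : jointLaw p0 pc
      = (volume.prod volume).withDensity
          fun z => ((p0 z.1 * pc z.1 z.2).toNNReal : ℝ≥0∞) := rfl
  rw [h, integrable_withDensity_iff_integrable_smul hmeas]
  refine integrable_congr (Filter.Eventually.of_forall fun z => ?_)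
  simp [NNReal.smul_def, Real.coe_toNNReal _ (hq0 z)]

lemma q_integrable (hq : Continuous fun z : E × E => p0 z.1 * pc z.1 z.2)
    (hq0 : ∀ z : E × E, 0 ≤ p0 z.1 * pc z.1 z.2)
    [IsProbabilityMeasure (jointLaw p0 pc)] :
    Integrable (fun z : E × E => p0 z.1 * pc z.1 z.2) (volume.prod volume) := by
  have h1 : (jointLaw p0 pc) Set.univ = 1 := measure_univ
  have h2 : ∫⁻ z, ENNReal.ofReal (p0 z.1 * pc z.1 z.2) ∂(volume.prod volume) = 1 := by
    rw [jointLaw] at h1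
    rwa [withDensity_apply _ MeasurableSet.univ, Measure.restrict_univ] at h1
  refine ⟨hq.aestronglyMeasurable, ?_⟩
  rw [HasFiniteIntegral]
  have : ∀ z : E × E, ‖p0 z.1 * pc z.1 z.2‖ₑ
      = ENNReal.ofReal (p0 z.1 * pc z.1 z.2) := fun z => Real.enorm_eq_ofReal (hq0 z)
  simp only [this, h2]
  exact ENNReal.one_lt_top


lemma key_grad
    (hp0pos : ∀ x, 0 < p0 x) (hpcpos : ∀ x0 x, 0 < pc x0 x)
    (hp0smooth : ContDiff ℝ (⊤ : ℕ∞) p0)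
    (hpcsmooth : ContDiff ℝ (⊤ : ℕ∞) (Function.uncurry pc))
    (hmargsmooth : ContDiff ℝ (⊤ : ℕ∞) (margDens p0 pc))
    [IsProbabilityMeasure (jointLaw p0 pc)]
    (hL2cond : MemLp (fun z : E × E =>
      gradient (fun y => Real.log (pc z.1 y)) z.2) 2 (jointLaw p0 pc)) :
    ∀ᵐ x ∂(volume : Measure E),
      gradient (margDens p0 pc) x
        = ∫ x0, p0 x0 • gradient (fun y => pc x0 y) x := by
  -- notations
  set m := margDens p0 pc with hm
  set q : E × E → ℝ := fun z => p0 z.1 * pc z.1 z.2 with hqdef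
  set gpc : E × E → E := fun z => gradient (fun y => pc z.1 y) z.2 with hgpcdef
  set b : E × E → E := fun z => gradient (fun y => Real.log (pc z.1 y)) z.2 with hbdef
  set G : E → E := fun x => ∫ x0, p0 x0 • gpc (x0, x) with hGdef
  -- basic continuity facts
  have hqcont : Continuous q :=
    (hp0smooth.continuous.comp continuous_fst).mul hpcsmooth.continuous
  have hq0 : ∀ z : E × E, 0 ≤ q z := fun z =>
    le_of_lt (mul_pos (hp0pos z.1) (hpcpos z.1 z.2))
  have hqint : Integrable q (volume.prod volume) := q_integrable hqcont hq0
  have hgpccont : Continuous gpc := continuous_gradient_partial hpcsmooth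
  have hpcdiff : ∀ x0 : E, Differentiable ℝ (fun y => pc x0 y) := by
    intro x0 y
    exact (hasFDerivAt_partial hpcsmooth (x0, y)).differentiableAt
  -- q • b = p0 • gpc
  have hbq : ∀ z : E × E, q z • b z = p0 z.1 • gpc z := by
    intro z
    have h1 : b z = (pc z.1 z.2)⁻¹ • gpc z :=
      gradient_log_eq (hpcdiff z.1 z.2) (ne_of_gt (hpcpos z.1 z.2))
    rw [h1, smul_smul, hqdef]
    rw [mul_inv_cancel_right₀ (ne_of_gt (hpcpos z.1 z.2))]
  have hbL1 : Integrable b (jointLaw p0 pc) := hL2cond.integrable one_le_two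
  have hqb : Integrable (fun z => q z • b z) (volume.prod volume) :=
    (jointLaw_integrable_iff hqcont hq0 b).1 hbL1
  have hpg : Integrable (fun z : E × E => p0 z.1 • gpc z) (volume.prod volume) := by
    refine hqb.congr (Filter.Eventually.of_forall fun z => ?_)
    exact hbq z
  have hsw : Integrable (fun w : E × E => p0 w.2 • gpc (w.2, w.1)) (volume.prod volume) :=
    hpg.swap
  -- G is integrable
  have hGsm : StronglyMeasurable G := by
    have : Continuous (fun w : E × E => p0 w.2 • gpc (w.2, w.1)) :=
      ((hp0smooth.continuous.comp continuous_snd).smul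
        (hgpccont.comp (continuous_snd.prodMk continuous_fst)))
    exact this.stronglyMeasurable.integral_prod_right'
  have hHH : Integrable (fun x => ∫ x0, ‖p0 x0 • gpc (x0, x)‖) volume :=
    hsw.integral_norm_prod_left
  have hGint : Integrable G volume := by
    refine Integrable.mono' hHH hGsm.aestronglyMeasurable ?_
    refine Filter.Eventually.of_forall fun x => ?_
    exact norm_integral_le_integral_norm _
  -- marginal gradient continuity
  have hgmcont : Continuous (gradient m) := continuous_gradient hmargsmooth
  -- main argument via test functions
  refine ae_eq_of_integral_contDiff_smul_eq
    (hgmcont.locallyIntegrable) (hGint.locallyIntegrable) ?_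
  intro g gsmooth gsupp
  have gcont : Continuous g := gsmooth.continuous
  -- bound for g
  obtain ⟨Cg, hCg⟩ : ∃ C, ∀ x, ‖g x‖ ≤ C := by
    rcases (isBounded_iff_forall_norm_le.1 (gsupp.isCompact_range gcont).isBounded)
      with ⟨C, hC⟩
    exact ⟨C, fun x => hC _ (Set.mem_range_self x)⟩
  -- integrability of the two integrands
  have hint1 : Integrable (fun x => g x • gradient m x) volume :=
    (gcont.smul hgmcont).integrable_of_hasCompactSupport (gsupp.smul_right)
  have hint2 : Integrable (fun x => g x • G x) volume := by
    refine Integrable.mono' (hGint.norm.const_mul Cg)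
      (gcont.aestronglyMeasurable.smul hGsm.aestronglyMeasurable) ?_
    refine Filter.Eventually.of_forall fun x => ?_
    rw [norm_smul]
    exact mul_le_mul_of_nonneg_right (hCg x) (norm_nonneg _)
  have hswcont : Continuous (fun w : E × E => p0 w.2 • gpc (w.2, w.1)) :=
    ((hp0smooth.continuous.comp continuous_snd).smul
      (hgpccont.comp (continuous_snd.prodMk continuous_fst)))
  -- prove equality of integrals via inner products
  refine ext_inner_right ℝ fun v => ?_
  have gdiff : Differentiable ℝ g := gsmooth.differentiable (by simp)
  have mdiff : Differentiable ℝ m := hmargsmooth.differentiable (by simp)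
  have hDcont : Continuous (fun x => fderiv ℝ g x v) :=
    (gsmooth.continuous_fderiv (by simp)).clm_apply continuous_const
  have hDsupp : HasCompactSupport (fun x => fderiv ℝ g x v) :=
    (gsupp.fderiv ℝ).comp_left (g := fun L : E →L[ℝ] ℝ => L v) rfl
  obtain ⟨Cd, hCd⟩ : ∃ C, ∀ x, ‖fderiv ℝ g x v‖ ≤ C := by
    rcases (isBounded_iff_forall_norm_le.1 (hDsupp.isCompact_range hDcont).isBounded)
      with ⟨C, hC⟩
    exact ⟨C, fun x => hC _ (Set.mem_range_self x)⟩
  -- continuity of directional derivatives via gradients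
  have hfm : ∀ x : E, fderiv ℝ m x v = ⟪gradient m x, v⟫_ℝ :=
    fun x => (inner_gradient_eq m x v).symm
  have hfpc : ∀ (x0 x : E), fderiv ℝ (fun y => pc x0 y) x v = ⟪gpc (x0, x), v⟫_ℝ :=
    fun x0 x => (inner_gradient_eq (fun y => pc x0 y) x v).symm
  -- LHS computation
  have hLHS : ⟪∫ x, g x • gradient m x, v⟫_ℝ = -∫ x, fderiv ℝ g x v * m x := by
    have e1 : ⟪∫ x, g x • gradient m x, v⟫_ℝ = ∫ x, g x * fderiv ℝ m x v := by
      rw [real_inner_comm, ← integral_inner hint1 v]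
      refine integral_congr_ae (Filter.Eventually.of_forall fun x => ?_)
      show ⟪v, g x • gradient m x⟫_ℝ = g x * fderiv ℝ m x v
      rw [real_inner_smul_right, real_inner_comm, inner_gradient_eq]
    rw [e1]
    refine integral_mul_fderiv_eq_neg_fderiv_mul_of_integrable ?_ ?_ ?_ (fun x _ => gdiff x) (fun x _ => mdiff x)
    · refine Continuous.integrable_of_hasCompactSupport
        (hDcont.mul hmargsmooth.continuous) ?_
      exact hDsupp.mul_right
    · refine Continuous.integrable_of_hasCompactSupport
        (gcont.mul ((continuous_gradient hmargsmooth).inner continuous_const |>.congr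
          fun x => (hfm x).symm)) ?_
      exact gsupp.mul_right
    · exact Continuous.integrable_of_hasCompactSupport
        (gcont.mul hmargsmooth.continuous) gsupp.mul_right
  -- a.e. integrability of the slices
  have haeint : ∀ᵐ x ∂(volume : Measure E),
      Integrable (fun x0 => p0 x0 • gpc (x0, x)) volume := hsw.prod_right_ae
  -- RHS computation
  have hRHS : ⟪∫ x, g x • G x, v⟫_ℝ = -∫ x, fderiv ℝ g x v * m x := by
    have e1 : ⟪∫ x, g x • G x, v⟫_ℝ
        = ∫ x, ∫ x0, g x * ⟪v, p0 x0 • gpc (x0, x)⟫_ℝ := by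
      rw [real_inner_comm, ← integral_inner hint2 v]
      refine integral_congr_ae ?_
      filter_upwards [haeint] with x hx
      show ⟪v, g x • G x⟫_ℝ = ∫ x0, g x * ⟪v, p0 x0 • gpc (x0, x)⟫_ℝ
      rw [real_inner_smul_right, integral_const_mul]
      congr 1
      rw [hGdef, ← integral_inner hx v]
    have e2 : ∫ x, ∫ x0, g x * ⟪v, p0 x0 • gpc (x0, x)⟫_ℝ
        = ∫ x0, ∫ x, g x * ⟪v, p0 x0 • gpc (x0, x)⟫_ℝ := by
      refine integral_integral_swap ?_
      refine Integrable.mono' ((hsw.norm).const_mul (Cg * ‖v‖)) ?_ ?_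
      · refine Continuous.aestronglyMeasurable ?_
        refine Continuous.congr
          ((gcont.comp continuous_fst).mul ((continuous_const : Continuous fun _ : E × E => v).inner hswcont)) ?_
        intro w
        rfl
      · refine Filter.Eventually.of_forall fun w => ?_
        show ‖g w.1 * ⟪v, p0 w.2 • gpc (w.2, w.1)⟫_ℝ‖
          ≤ Cg * ‖v‖ * ‖p0 w.2 • gpc (w.2, w.1)‖
        have h1 : ‖⟪v, p0 w.2 • gpc (w.2, w.1)⟫_ℝ‖ ≤ ‖v‖ * ‖p0 w.2 • gpc (w.2, w.1)‖ :=
          norm_inner_le_norm _ _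
        calc ‖g w.1 * ⟪v, p0 w.2 • gpc (w.2, w.1)⟫_ℝ‖
            = ‖g w.1‖ * ‖⟪v, p0 w.2 • gpc (w.2, w.1)⟫_ℝ‖ := norm_mul _ _
          _ ≤ Cg * (‖v‖ * ‖p0 w.2 • gpc (w.2, w.1)‖) :=
              mul_le_mul (hCg _) h1 (norm_nonneg _) (le_trans (norm_nonneg _) (hCg w.1))
          _ = Cg * ‖v‖ * ‖p0 w.2 • gpc (w.2, w.1)‖ := by ring
    have e3 : ∀ x0 : E, ∫ x, g x * ⟪v, p0 x0 • gpc (x0, x)⟫_ℝ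
        = p0 x0 * -∫ x, fderiv ℝ g x v * pc x0 x := by
      intro x0
      have e3a : ∫ x, g x * ⟪v, p0 x0 • gpc (x0, x)⟫_ℝ
          = p0 x0 * ∫ x, g x * fderiv ℝ (fun y => pc x0 y) x v := by
        rw [← integral_const_mul]
        refine integral_congr_ae (Filter.Eventually.of_forall fun x => ?_)
        show g x * ⟪v, p0 x0 • gpc (x0, x)⟫_ℝ
          = p0 x0 * (g x * fderiv ℝ (fun y => pc x0 y) x v)
        rw [real_inner_smul_right, hfpc x0 x, real_inner_comm]
        ring
      rw [e3a]
      congr 1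
      have hpccont : Continuous (fun y => pc x0 y) :=
        hpcsmooth.continuous.comp (Continuous.prodMk_right x0)
      have hpcDcont : Continuous (fun x => fderiv ℝ (fun y => pc x0 y) x v) := by
        refine ((hgpccont.comp (Continuous.prodMk_right x0)).inner (continuous_const : Continuous fun _ : E => v)).congr ?_
        exact fun x => (hfpc x0 x).symm
      refine integral_mul_fderiv_eq_neg_fderiv_mul_of_integrable ?_ ?_ ?_ (fun x _ => gdiff x) (fun x _ => hpcdiff x0 x)
      · exact Continuous.integrable_of_hasCompactSupport
          (hDcont.mul hpccont) hDsupp.mul_right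
      · exact Continuous.integrable_of_hasCompactSupport
          (gcont.mul hpcDcont) gsupp.mul_right
      · exact Continuous.integrable_of_hasCompactSupport
          (gcont.mul hpccont) gsupp.mul_right
    have e4 : ∫ x0, ∫ x, g x * ⟪v, p0 x0 • gpc (x0, x)⟫_ℝ
        = -∫ x0, ∫ x, p0 x0 * (fderiv ℝ g x v * pc x0 x) := by
      rw [← integral_neg]
      refine integral_congr_ae (Filter.Eventually.of_forall fun x0 => ?_)
      show ∫ x, g x * ⟪v, p0 x0 • gpc (x0, x)⟫_ℝ
        = -∫ x, p0 x0 * (fderiv ℝ g x v * pc x0 x)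
      rw [e3 x0, integral_const_mul, mul_neg]
    have e5 : ∫ x0, ∫ x, p0 x0 * (fderiv ℝ g x v * pc x0 x)
        = ∫ x, ∫ x0, p0 x0 * (fderiv ℝ g x v * pc x0 x) := by
      refine (integral_integral_swap ?_).symm
      refine Integrable.mono' (hqint.swap.norm.const_mul Cd) ?_ ?_
      · refine Continuous.aestronglyMeasurable ?_
        refine Continuous.congr ((hp0smooth.continuous.comp continuous_snd).mul
          ((hDcont.comp continuous_fst).mul
            (hpcsmooth.continuous.comp (continuous_snd.prodMk continuous_fst)))) ?_
        intro w
        simp [Function.uncurry]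
      · refine Filter.Eventually.of_forall fun w => ?_
        show ‖p0 w.2 * (fderiv ℝ g w.1 v * pc w.2 w.1)‖ ≤ Cd * ‖p0 w.2 * pc w.2 w.1‖
        have h0 : 0 ≤ p0 w.2 := le_of_lt (hp0pos w.2)
        have h1 : 0 ≤ pc w.2 w.1 := le_of_lt (hpcpos w.2 w.1)
        calc ‖p0 w.2 * (fderiv ℝ g w.1 v * pc w.2 w.1)‖
            = ‖fderiv ℝ g w.1 v‖ * (p0 w.2 * pc w.2 w.1) := by
              rw [norm_mul, norm_mul]
              rw [Real.norm_of_nonneg h0, Real.norm_of_nonneg h1]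
              ring
          _ ≤ Cd * (p0 w.2 * pc w.2 w.1) := by
              refine mul_le_mul_of_nonneg_right (hCd w.1) (mul_nonneg h0 h1)
          _ ≤ Cd * ‖p0 w.2 * pc w.2 w.1‖ := by
              rw [Real.norm_of_nonneg (mul_nonneg h0 h1)]
    have e6 : ∀ x : E, ∫ x0, p0 x0 * (fderiv ℝ g x v * pc x0 x)
        = m x * fderiv ℝ g x v := by
      intro x
      have : ∀ x0 : E, p0 x0 * (fderiv ℝ g x v * pc x0 x)
          = (p0 x0 * pc x0 x) * fderiv ℝ g x v := fun x0 => by ring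
      rw [integral_congr_ae (Filter.Eventually.of_forall this), integral_mul_const]
      rfl
    have e7 : ∫ x, ∫ x0, p0 x0 * (fderiv ℝ g x v * pc x0 x)
        = ∫ x, fderiv ℝ g x v * m x := by
      refine integral_congr_ae (Filter.Eventually.of_forall fun x => ?_)
      show ∫ x0, p0 x0 * (fderiv ℝ g x v * pc x0 x) = fderiv ℝ g x v * m x
      rw [e6 x, mul_comm]
    rw [e1, e2, e4, e5, e7]
  rw [hLHS, hRHS]


lemma cross_eq
    (hp0pos : ∀ x, 0 < p0 x) (hpcpos : ∀ x0 x, 0 < pc x0 x)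
    (hp0smooth : ContDiff ℝ (⊤ : ℕ∞) p0)
    (hpcsmooth : ContDiff ℝ (⊤ : ℕ∞) (Function.uncurry pc))
    (hmargsmooth : ContDiff ℝ (⊤ : ℕ∞) (margDens p0 pc))
    (hmargpos : ∀ x, 0 < margDens p0 pc x)
    [IsProbabilityMeasure (jointLaw p0 pc)]
    (hL2marg : MemLp (fun x => gradient (fun y => Real.log (margDens p0 pc y)) x) 2
      ((jointLaw p0 pc).map Prod.snd))
    (hL2cond : MemLp (fun z : E × E =>
      gradient (fun y => Real.log (pc z.1 y)) z.2) 2 (jointLaw p0 pc))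
    (s : E → E) (hs : MemLp s 2 ((jointLaw p0 pc).map Prod.snd))
    (hsm : StronglyMeasurable s) :
    ∫ x, ⟪gradient (fun y => Real.log (margDens p0 pc y)) x, s x⟫_ℝ
        ∂((jointLaw p0 pc).map Prod.snd)
      = ∫ z, ⟪gradient (fun y => Real.log (pc z.1 y)) z.2, s z.2⟫_ℝ ∂(jointLaw p0 pc) := by
  set m := margDens p0 pc with hm
  set q : E × E → ℝ := fun z => p0 z.1 * pc z.1 z.2 with hqdef
  set gpc : E × E → E := fun z => gradient (fun y => pc z.1 y) z.2 with hgpcdef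
  set b : E × E → E := fun z => gradient (fun y => Real.log (pc z.1 y)) z.2 with hbdef
  set a : E → E := fun x => gradient (fun y => Real.log (m y)) x with hadef
  set G : E → E := fun x => ∫ x0, p0 x0 • gpc (x0, x) with hGdef
  have hqcont : Continuous q :=
    (hp0smooth.continuous.comp continuous_fst).mul hpcsmooth.continuous
  have hq0 : ∀ z : E × E, 0 ≤ q z := fun z =>
    le_of_lt (mul_pos (hp0pos z.1) (hpcpos z.1 z.2))
  have hgpccont : Continuous gpc := continuous_gradient_partial hpcsmooth
  have hpcdiff : ∀ x0 : E, Differentiable ℝ (fun y => pc x0 y) := by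
    intro x0 y
    exact (hasFDerivAt_partial hpcsmooth (x0, y)).differentiableAt
  have hlogm : ContDiff ℝ (⊤ : ℕ∞) (fun y => Real.log (m y)) :=
    hmargsmooth.log fun x => ne_of_gt (hmargpos x)
  have hacont : Continuous a := continuous_gradient hlogm
  have hbcont : Continuous b := by
    have h1 : ContDiff ℝ (⊤ : ℕ∞) (fun z : E × E => Real.log (Function.uncurry pc z)) :=
      hpcsmooth.log fun z => ne_of_gt (hpcpos z.1 z.2)
    exact continuous_gradient_partial h1
  have hmeasP : MeasurePreserving Prod.snd (jointLaw p0 pc)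
      ((jointLaw p0 pc).map Prod.snd) := ⟨measurable_snd, rfl⟩
  -- MemLp facts on the joint law
  have hu : MemLp (fun z : E × E => a z.2) 2 (jointLaw p0 pc) :=
    hL2marg.comp_measurePreserving hmeasP
  have hw : MemLp (fun z : E × E => s z.2) 2 (jointLaw p0 pc) :=
    hs.comp_measurePreserving hmeasP
  have hbL2 : MemLp b 2 (jointLaw p0 pc) := hL2cond
  -- ae-integrability facts
  have hbq : ∀ z : E × E, q z • b z = p0 z.1 • gpc z := by
    intro z
    have h1 : b z = (pc z.1 z.2)⁻¹ • gpc z :=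
      gradient_log_eq (hpcdiff z.1 z.2) (ne_of_gt (hpcpos z.1 z.2))
    rw [h1, smul_smul, hqdef]
    rw [mul_inv_cancel_right₀ (ne_of_gt (hpcpos z.1 z.2))]
  have hbL1 : Integrable b (jointLaw p0 pc) := hbL2.integrable one_le_two
  have hqb : Integrable (fun z => q z • b z) (volume.prod volume) :=
    (jointLaw_integrable_iff hqcont hq0 b).1 hbL1
  have hpg : Integrable (fun z : E × E => p0 z.1 • gpc z) (volume.prod volume) := by
    refine hqb.congr (Filter.Eventually.of_forall fun z => hbq z)
  have hsw : Integrable (fun w : E × E => p0 w.2 • gpc (w.2, w.1)) (volume.prod volume) :=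
    hpg.swap
  have haeint : ∀ᵐ x ∂(volume : Measure E),
      Integrable (fun x0 => p0 x0 • gpc (x0, x)) volume := hsw.prod_right_ae
  -- the key gradient identity
  have hkey : ∀ᵐ x ∂(volume : Measure E), gradient m x = G x :=
    key_grad hp0pos hpcpos hp0smooth hpcsmooth hmargsmooth hL2cond
  -- a in terms of gradient of m
  have ha : ∀ x, m x • a x = gradient m x := by
    intro x
    have h1 : a x = (m x)⁻¹ • gradient m x :=
      gradient_log_eq (hmargsmooth.differentiable (by simp) x)
        (ne_of_gt (hmargpos x))
    rw [h1, smul_inv_smul₀ (ne_of_gt (hmargpos x))]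
  -- LHS chain
  have lhs1 : ∫ x, ⟪a x, s x⟫_ℝ ∂((jointLaw p0 pc).map Prod.snd)
      = ∫ z, ⟪a z.2, s z.2⟫_ℝ ∂(jointLaw p0 pc) := by
    refine integral_map measurable_snd.aemeasurable ?_
    exact (hacont.aestronglyMeasurable.inner hsm.aestronglyMeasurable)
  have hinnerAS : Integrable (fun z : E × E => ⟪a z.2, s z.2⟫_ℝ) (jointLaw p0 pc) :=
    hu.integrable_inner'' hw
  have hinnerBS : Integrable (fun z : E × E => ⟪b z, s z.2⟫_ℝ) (jointLaw p0 pc) :=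
    hbL2.integrable_inner'' hw
  have lhs2 : ∫ z, ⟪a z.2, s z.2⟫_ℝ ∂(jointLaw p0 pc)
      = ∫ x, ∫ x0, q (x0, x) * ⟪a x, s x⟫_ℝ ∂volume ∂volume := by
    rw [jointLaw_integral_eq hqcont hq0]
    exact integral_prod_symm _
      ((jointLaw_integrable_iff hqcont hq0 _).1 hinnerAS)
  have lhs3 : ∫ x, ∫ x0, q (x0, x) * ⟪a x, s x⟫_ℝ ∂volume
      = ∫ x, ⟪gradient m x, s x⟫_ℝ ∂(volume : Measure E) := by
    refine integral_congr_ae (Filter.Eventually.of_forall fun x => ?_)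
    show ∫ x0, q (x0, x) * ⟪a x, s x⟫_ℝ = ⟪gradient m x, s x⟫_ℝ
    rw [integral_mul_const, ← ha x, real_inner_smul_left]
    rfl
  -- RHS chain
  have rhs2 : ∫ z, ⟪b z, s z.2⟫_ℝ ∂(jointLaw p0 pc)
      = ∫ x, ∫ x0, ⟪q (x0, x) • b (x0, x), s x⟫_ℝ ∂volume ∂volume := by
    rw [jointLaw_integral_eq hqcont hq0]
    have h1 := integral_prod_symm (fun z : E × E => q z • ⟪b z, s z.2⟫_ℝ)
      ((jointLaw_integrable_iff hqcont hq0 _).1 hinnerBS)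
    rw [h1]
    refine integral_congr_ae (Filter.Eventually.of_forall fun x => ?_)
    refine integral_congr_ae (Filter.Eventually.of_forall fun x0 => ?_)
    show q (x0, x) • ⟪b (x0, x), s x⟫_ℝ = ⟪q (x0, x) • b (x0, x), s x⟫_ℝ
    rw [real_inner_smul_left]
    rfl
  have rhs3 : ∫ x, ∫ x0, ⟪q (x0, x) • b (x0, x), s x⟫_ℝ ∂volume
      = ∫ x, ⟪G x, s x⟫_ℝ ∂(volume : Measure E) := by
    refine integral_congr_ae ?_
    filter_upwards [haeint] with x hx
    show ∫ x0, ⟪q (x0, x) • b (x0, x), s x⟫_ℝ = ⟪G x, s x⟫_ℝ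
    have h1 : ∀ x0 : E, ⟪q (x0, x) • b (x0, x), s x⟫_ℝ
        = ⟪s x, p0 x0 • gpc (x0, x)⟫_ℝ := by
      intro x0
      rw [hbq (x0, x), real_inner_comm]
    rw [integral_congr_ae (Filter.Eventually.of_forall h1), integral_inner hx (s x),
      real_inner_comm]
  have mid : ∫ x, ⟪gradient m x, s x⟫_ℝ ∂(volume : Measure E)
      = ∫ x, ⟪G x, s x⟫_ℝ ∂(volume : Measure E) := by
    refine integral_congr_ae ?_
    filter_upwards [hkey] with x hx
    rw [hx]
  rw [lhs1, lhs2, lhs3, mid, ← rhs3, ← rhs2]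

end Main

/-- **denoising score matching identity.** For each `t`,
`E_{x_t} ‖∇ log p_t(x_t) − s(x_t)‖² = E_{x_0} E_{x_t ∣ x_0} ‖∇ log p_t(x_t ∣ x_0) − s(x_t)‖² + C`
where `C` does not depend on `s`; here `s` ranges over square-integrable vector fields,
`p_t(x_t) = ∫ p_t(x_t ∣ x_0) p_0(x_0) dx_0`, and expectations are with respect to the joint
law of `(x_0, x_t)` (resp. its second marginal).  In particular the two objectives have the
same minimizers over `s`. -/
theorem stmt_14 {d : ℕ}
    (p0 : EuclideanSpace ℝ (Fin d) → ℝ)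
    (pc : EuclideanSpace ℝ (Fin d) → EuclideanSpace ℝ (Fin d) → ℝ)
    (hp0pos : ∀ x, 0 < p0 x) (hpcpos : ∀ x0 x, 0 < pc x0 x)
    (hp0smooth : ContDiff ℝ (⊤ : ℕ∞) p0)
    (hpcsmooth : ContDiff ℝ (⊤ : ℕ∞) (Function.uncurry pc))
    (hmargsmooth : ContDiff ℝ (⊤ : ℕ∞) (margDens p0 pc))
    (hmargpos : ∀ x, 0 < margDens p0 pc x)
    [IsProbabilityMeasure (jointLaw p0 pc)]
    -- square-integrability of the marginal and conditional scores
    (hL2marg : MemLp (fun x => gradient (fun y => Real.log (margDens p0 pc y)) x) 2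
      ((jointLaw p0 pc).map Prod.snd))
    (hL2cond : MemLp (fun z : EuclideanSpace ℝ (Fin d) × EuclideanSpace ℝ (Fin d) =>
      gradient (fun y => Real.log (pc z.1 y)) z.2) 2 (jointLaw p0 pc)) :
    ∃ C : ℝ, ∀ s : EuclideanSpace ℝ (Fin d) → EuclideanSpace ℝ (Fin d),
      MemLp s 2 ((jointLaw p0 pc).map Prod.snd) →
      ∫ x, ‖gradient (fun y => Real.log (margDens p0 pc y)) x - s x‖ ^ 2
          ∂((jointLaw p0 pc).map Prod.snd)
        = (∫ z, ‖gradient (fun y => Real.log (pc z.1 y)) z.2 - s z.2‖ ^ 2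
            ∂(jointLaw p0 pc)) + C := by
  classical
  set μ := jointLaw p0 pc with hμ
  set ν := (jointLaw p0 pc).map Prod.snd with hν
  set a : EuclideanSpace ℝ (Fin d) → EuclideanSpace ℝ (Fin d) := fun x => gradient (fun y => Real.log (margDens p0 pc y)) x with hadef
  set b : EuclideanSpace ℝ (Fin d) × EuclideanSpace ℝ (Fin d) → EuclideanSpace ℝ (Fin d) := fun z => gradient (fun y => Real.log (pc z.1 y)) z.2 with hbdef
  have hacont : Continuous a := by
    have hlogm : ContDiff ℝ (⊤ : ℕ∞) (fun y => Real.log (margDens p0 pc y)) :=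
      hmargsmooth.log fun x => ne_of_gt (hmargpos x)
    exact continuous_gradient hlogm
  have hbcont : Continuous b := by
    have h1 : ContDiff ℝ (⊤ : ℕ∞) (fun z : EuclideanSpace ℝ (Fin d) × EuclideanSpace ℝ (Fin d) => Real.log (Function.uncurry pc z)) :=
      hpcsmooth.log fun z => ne_of_gt (hpcpos z.1 z.2)
    exact continuous_gradient_partial h1
  have hmeasP : MeasurePreserving Prod.snd μ ν := ⟨measurable_snd, rfl⟩
  refine ⟨(∫ x, ‖a x‖ ^ 2 ∂ν) - ∫ z, ‖b z‖ ^ 2 ∂μ, ?_⟩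
  intro s hs
  show ∫ x, ‖a x - s x‖ ^ 2 ∂ν
      = (∫ z, ‖b z - s z.2‖ ^ 2 ∂μ) + ((∫ x, ‖a x‖ ^ 2 ∂ν) - ∫ z, ‖b z‖ ^ 2 ∂μ)
  -- replace s by a strongly measurable representative
  obtain ⟨s', hs'sm, hss'⟩ :
      ∃ s' : EuclideanSpace ℝ (Fin d) → EuclideanSpace ℝ (Fin d), StronglyMeasurable s' ∧ s =ᵐ[ν] s' :=
    ⟨hs.aestronglyMeasurable.mk s, hs.aestronglyMeasurable.stronglyMeasurable_mk,
      hs.aestronglyMeasurable.ae_eq_mk⟩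
  have hs' : MemLp s' 2 ν := hs.ae_eq hss'
  have hss'2 : (fun z : EuclideanSpace ℝ (Fin d) × EuclideanSpace ℝ (Fin d) => s z.2) =ᵐ[μ] fun z => s' z.2 :=
    ae_of_ae_map measurable_snd.aemeasurable hss'
  have hL : ∫ x, ‖a x - s x‖ ^ 2 ∂ν = ∫ x, ‖a x - s' x‖ ^ 2 ∂ν := by
    refine integral_congr_ae ?_
    filter_upwards [hss'] with x hx
    rw [hx]
  have hR : ∫ z, ‖b z - s z.2‖ ^ 2 ∂μ = ∫ z, ‖b z - s' z.2‖ ^ 2 ∂μ := by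
    refine integral_congr_ae ?_
    filter_upwards [hss'2] with z hz
    rw [hz]
  rw [hL, hR]
  -- MemLp facts over μ
  have hu : MemLp (fun z : EuclideanSpace ℝ (Fin d) × EuclideanSpace ℝ (Fin d) => a z.2) 2 μ := hL2marg.comp_measurePreserving hmeasP
  have hw : MemLp (fun z : EuclideanSpace ℝ (Fin d) × EuclideanSpace ℝ (Fin d) => s' z.2) 2 μ := hs'.comp_measurePreserving hmeasP
  have hbL2 : MemLp b 2 μ := hL2cond
  -- integrability of all the pieces
  have iA : Integrable (fun z : EuclideanSpace ℝ (Fin d) × EuclideanSpace ℝ (Fin d) => ‖a z.2‖ ^ 2) μ :=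
    (memLp_two_iff_integrable_sq_norm hu.1).1 hu
  have iB : Integrable (fun z : EuclideanSpace ℝ (Fin d) × EuclideanSpace ℝ (Fin d) => ‖b z‖ ^ 2) μ :=
    (memLp_two_iff_integrable_sq_norm hbL2.1).1 hbL2
  have iW : Integrable (fun z : EuclideanSpace ℝ (Fin d) × EuclideanSpace ℝ (Fin d) => ‖s' z.2‖ ^ 2) μ :=
    (memLp_two_iff_integrable_sq_norm hw.1).1 hw
  have iAW : Integrable (fun z : EuclideanSpace ℝ (Fin d) × EuclideanSpace ℝ (Fin d) => ⟪a z.2, s' z.2⟫_ℝ) μ := hu.integrable_inner'' hw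
  have iBW : Integrable (fun z : EuclideanSpace ℝ (Fin d) × EuclideanSpace ℝ (Fin d) => ⟪b z, s' z.2⟫_ℝ) μ := hbL2.integrable_inner'' hw
  -- transfer the ν-integrals to μ-integrals
  have mapA : ∫ x, ‖a x - s' x‖ ^ 2 ∂ν = ∫ z, ‖a z.2 - s' z.2‖ ^ 2 ∂μ := by
    refine integral_map measurable_snd.aemeasurable ?_
    have h1 : AEStronglyMeasurable (fun x => a x - s' x) ν :=
      hacont.aestronglyMeasurable.sub hs'sm.aestronglyMeasurable
    exact (h1.norm.mul h1.norm).congr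
      (Filter.Eventually.of_forall fun x => (pow_two ‖a x - s' x‖).symm)
  have mapA2 : ∫ x, ‖a x‖ ^ 2 ∂ν = ∫ z, ‖a z.2‖ ^ 2 ∂μ := by
    refine integral_map measurable_snd.aemeasurable ?_
    have h1 : AEStronglyMeasurable a ν := hacont.aestronglyMeasurable
    exact (h1.norm.mul h1.norm).congr
      (Filter.Eventually.of_forall fun x => (pow_two ‖a x‖).symm)
  have mapCross : ∫ x, ⟪a x, s' x⟫_ℝ ∂ν = ∫ z, ⟪a z.2, s' z.2⟫_ℝ ∂μ := by
    refine integral_map measurable_snd.aemeasurable ?_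
    exact hacont.aestronglyMeasurable.inner hs'sm.aestronglyMeasurable
  -- the cross-term identity
  have hcross : ∫ x, ⟪a x, s' x⟫_ℝ ∂ν = ∫ z, ⟪b z, s' z.2⟫_ℝ ∂μ :=
    cross_eq hp0pos hpcpos hp0smooth hpcsmooth hmargsmooth hmargpos hL2marg hL2cond
      s' hs' hs'sm
  have hcross2 : ∫ z, ⟪a z.2, s' z.2⟫_ℝ ∂μ = ∫ z, ⟪b z, s' z.2⟫_ℝ ∂μ := by
    rw [← mapCross, hcross]
  -- expansions of the squared norms
  have expand1 : ∫ z, ‖a z.2 - s' z.2‖ ^ 2 ∂μ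
      = (∫ z, ‖a z.2‖ ^ 2 ∂μ) - 2 * (∫ z, ⟪a z.2, s' z.2⟫_ℝ ∂μ)
        + ∫ z, ‖s' z.2‖ ^ 2 ∂μ := by
    have h1 : ∫ z, ‖a z.2 - s' z.2‖ ^ 2 ∂μ
        = ∫ z, (‖a z.2‖ ^ 2 - 2 * ⟪a z.2, s' z.2⟫_ℝ + ‖s' z.2‖ ^ 2) ∂μ := by
      refine integral_congr_ae (Filter.Eventually.of_forall fun z => ?_)
      exact norm_sub_sq_real _ _
    have i1 : Integrable (fun z : EuclideanSpace ℝ (Fin d) × EuclideanSpace ℝ (Fin d) =>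
        ‖a z.2‖ ^ 2 - 2 * ⟪a z.2, s' z.2⟫_ℝ) μ := iA.sub (iAW.const_mul 2)
    rw [h1, integral_add i1 iW, integral_sub iA (iAW.const_mul 2), integral_const_mul]
  have expand2 : ∫ z, ‖b z - s' z.2‖ ^ 2 ∂μ
      = (∫ z, ‖b z‖ ^ 2 ∂μ) - 2 * (∫ z, ⟪b z, s' z.2⟫_ℝ ∂μ)
        + ∫ z, ‖s' z.2‖ ^ 2 ∂μ := by
    have h1 : ∫ z, ‖b z - s' z.2‖ ^ 2 ∂μ
        = ∫ z, (‖b z‖ ^ 2 - 2 * ⟪b z, s' z.2⟫_ℝ + ‖s' z.2‖ ^ 2) ∂μ := by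
      refine integral_congr_ae (Filter.Eventually.of_forall fun z => ?_)
      exact norm_sub_sq_real _ _
    have i1 : Integrable (fun z : EuclideanSpace ℝ (Fin d) × EuclideanSpace ℝ (Fin d) =>
        ‖b z‖ ^ 2 - 2 * ⟪b z, s' z.2⟫_ℝ) μ := iB.sub (iBW.const_mul 2)
    rw [h1, integral_add i1 iW, integral_sub iB (iBW.const_mul 2), integral_const_mul]
  rw [mapA, expand1, expand2, mapA2, hcross2]
  ring
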